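/- arXiv:1012.4604 — 4 statements merged into one kernel-verified Lean document; each statement's English description precedes it below -/
import Mathlib

section
/- Let G be a group acting on a measurable space (X, 𝔄) whose action is totally nonfree, i.e., the σ-algebra generated by the fixed-point sets {fixedBy X g | g ∈ G} equals the full σ-algebra 𝔄 of X. Then the pullback under the stabilizer map Ψ of the σ-algebra 𝔅 on Subgroup G equals 𝔄; that is, MeasurableSpace.comap Ψ 𝔅 = 𝔄. -/
open MeasureTheory MulAction

/-- The σ-algebra 𝔅 on `Subgroup G` generated by the sets `L_g = {H | g ∈ H}`. -/
instance subgroupMeasurableSpace (G : Type*) [Group G] : MeasurableSpace (Subgroup G) :=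
  MeasurableSpace.generateFrom {s : Set (Subgroup G) | ∃ g : G, s = {H : Subgroup G | g ∈ H}}

/-- Corollary 3: if the action of `G` on `(X, 𝔄)` is totally nonfree, i.e. the σ-algebra
generated by the fixed-point sets `fixedBy X g` is the whole σ-algebra 𝔄 of `X`, then the
pullback under the stabilizer map of the σ-algebra 𝔅 on `Subgroup G` equals 𝔄. -/
theorem comap_stabilizer_of_totallyNonfree {G X : Type*} [Group G] [MulAction G X]
    [m : MeasurableSpace X]
    (htnf : MeasurableSpace.generateFrom {s : Set X | ∃ g : G, s = MulAction.fixedBy X g} = m) :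
    MeasurableSpace.comap (fun x : X => MulAction.stabilizer G x)
        (subgroupMeasurableSpace G) = m := by
  rw [subgroupMeasurableSpace, MeasurableSpace.comap_generateFrom, ← htnf]
  congr 1
  ext s
  constructor
  · rintro ⟨t, ⟨g, rfl⟩, rfl⟩
    exact ⟨g, rfl⟩
  · rintro ⟨g, rfl⟩
    exact ⟨{H | g ∈ H}, ⟨g, rfl⟩, rfl⟩
end

section
/- Let G be a group acting on a set X, and suppose the σ-algebra on X generated by the fixed-point sets {fixedBy X g | g ∈ G} separates points: for all x ≠ y in X there is a set A in this σ-algebra with x ∈ A and y ∉ A. Then the stabilizer map Ψ : X → Subgroup G is injective, i.e., distinct points of X have distinct stabilizers. -/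
open MeasureTheory MulAction

/-- Pointwise form of Corollary 3: if the σ-algebra generated by the fixed-point sets
`fixedBy X g` separates points of `X`, then the stabilizer map `Ψ x = stabilizer G x`
is injective, i.e. distinct points have distinct stabilizers. -/
theorem stabilizer_injective_of_separating {G X : Type*} [Group G] [MulAction G X]
    (hsep : ∀ x y : X, x ≠ y → ∃ A : Set X,
      MeasurableSet[MeasurableSpace.generateFrom
        {s : Set X | ∃ g : G, s = MulAction.fixedBy X g}] A ∧ x ∈ A ∧ y ∉ A) :
    Function.Injective (fun x : X => MulAction.stabilizer G x) := by
  intro x y h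
  simp only at h
  by_contra hxy
  obtain ⟨A, hA, hxA, hyA⟩ := hsep x y hxy
  have key : ∀ s : Set X,
      MeasurableSpace.GenerateMeasurable {s : Set X | ∃ g : G, s = MulAction.fixedBy X g} s →
      (x ∈ s ↔ y ∈ s) := by
    intro s hs
    induction hs with
    | basic u hu =>
        obtain ⟨g, rfl⟩ := hu
        constructor
        · intro hx
          have : g ∈ MulAction.stabilizer G x := hx
          rw [h] at this
          exact this
        · intro hy
          have : g ∈ MulAction.stabilizer G y := hy
          rw [← h] at this
          exact this
    | empty => simp
    | compl u _ ih => simp [Set.mem_compl_iff, ih]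
    | iUnion f _ ih => simp only [Set.mem_iUnion]; exact exists_congr ih
  exact hyA ((key A hA).mp hxA)
end

section
/- Let G be a countable group acting measurably on standard Borel spaces X and X' equipped with G-invariant Borel probability measures μ and μ'. Assume both actions are extremely nonfree: there is a μ-conull set S ⊆ X on which the stabilizer map Ψ is injective, and a μ'-conull set S' ⊆ X' on which Ψ' is injective. If the pushforward measures on (Subgroup G, 𝔅) coincide, Measure.map Ψ μ = Measure.map Ψ' μ', then the two actions are metrically isomorphic: there exist G-invariant conull measurable sets A ⊆ X and B ⊆ X' and a bijection T : A → B that is measurable with measurable inverse, G-equivariant (T(g • x) = g • T(x) for all g ∈ G, x ∈ A), and measure-preserving for the restrictions of μ and μ'. -/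
open MeasureTheory MulAction Pointwise

instance subgroupCountablySeparated (G : Type*) [Group G] [Countable G] :
    MeasurableSpace.CountablySeparated (Subgroup G) := by
  constructor
  refine ⟨{s : Set (Subgroup G) | ∃ g : G, s = {H : Subgroup G | g ∈ H}}, ?_, ?_, ?_⟩
  · have : {s : Set (Subgroup G) | ∃ g : G, s = {H : Subgroup G | g ∈ H}} =
        Set.range (fun g : G => {H : Subgroup G | g ∈ H}) := by
      ext s; simp [eq_comm]
    rw [this]; exact Set.countable_range _
  · exact fun s hs => MeasurableSpace.measurableSet_generateFrom hs
  · rintro H - K - h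
    ext g
    exact h {H : Subgroup G | g ∈ H} ⟨g, rfl⟩

lemma measurable_stabilizer' {G X : Type*} [Group G] [MeasurableSpace X] [StandardBorelSpace X]
    [MulAction G X] (hmeas : ∀ g : G, Measurable (fun x : X => g • x)) :
    Measurable (fun x : X => MulAction.stabilizer G x) := by
  letI := upgradeStandardBorel X
  apply measurable_generateFrom
  rintro s ⟨g, rfl⟩
  have : (fun x : X => MulAction.stabilizer G x) ⁻¹' {H : Subgroup G | g ∈ H}
      = {x : X | (fun x : X => g • x) x = id x} := by
    ext x; simp [MulAction.mem_stabilizer_iff]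
  rw [this]
  exact (hmeas g).stronglyMeasurable.measurableSet_eq_fun measurable_id.stronglyMeasurable

lemma exists_invariant_conull {G X : Type*} [Group G] [Countable G] [MeasurableSpace X]
    [MulAction G X] (hmeas : ∀ g : G, Measurable (fun x : X => g • x))
    (μ : Measure X) (hinv : ∀ g : G, Measure.map (fun x : X => g • x) μ = μ)
    (S : Set X) (hS : μ Sᶜ = 0) :
    ∃ A : Set X, MeasurableSet A ∧ μ Aᶜ = 0 ∧ A ⊆ S ∧ ∀ g : G, g • A = A := by
  set A0 : Set X := (toMeasurable μ Sᶜ)ᶜ with hA0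
  have mA0 : MeasurableSet A0 := (measurableSet_toMeasurable μ Sᶜ).compl
  have hA0c : μ A0ᶜ = 0 := by rw [hA0, compl_compl, measure_toMeasurable, hS]
  have hA0S : A0 ⊆ S := by
    rw [hA0, Set.compl_subset_comm]
    exact subset_toMeasurable μ Sᶜ
  have key : ∀ g : G, (g • A0 : Set X) = (fun x : X => g⁻¹ • x) ⁻¹' A0 := by
    intro g; ext x; simp [Set.mem_smul_set_iff_inv_smul_mem]
  refine ⟨⋂ g : G, g • A0, ?_, ?_, ?_, ?_⟩
  · exact MeasurableSet.iInter fun g => (key g) ▸ (hmeas g⁻¹) mA0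
  · rw [Set.compl_iInter]
    refine measure_iUnion_null fun g => ?_
    rw [key g, ← Set.preimage_compl, ← Measure.map_apply (hmeas g⁻¹) mA0.compl, hinv g⁻¹]
    exact hA0c
  · intro x hx
    have := Set.mem_iInter.1 hx (1 : G)
    rw [one_smul] at this
    exact hA0S this
  · intro g
    ext x
    simp only [Set.mem_smul_set_iff_inv_smul_mem, Set.mem_iInter]
    constructor
    · intro h k
      have := h (g⁻¹ * k)
      rwa [mul_inv_rev, inv_inv, mul_smul, smul_inv_smul] at this
    · intro h k
      have := h (g * k)
      rwa [mul_inv_rev, mul_smul] at this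

/-- 'If' direction of Theorem 5: for extremely nonfree, measurable, measure-preserving actions
of a countable group `G` on standard Borel probability spaces, equality of the pushforward
measures under the stabilizer maps implies that the actions are metrically isomorphic:
there are invariant conull measurable sets `A`, `B` and a bimeasurable, `G`-equivariant,
measure-preserving bijection `T : A → B`. -/
theorem metrically_isomorphic_of_map_stabilizer_eq
    {G X X' : Type*} [Group G] [Countable G]
    [MeasurableSpace X] [StandardBorelSpace X] [MeasurableSpace X'] [StandardBorelSpace X']
    [MulAction G X] [MulAction G X']
    (hmeas : ∀ g : G, Measurable (fun x : X => g • x))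
    (hmeas' : ∀ g : G, Measurable (fun x : X' => g • x))
    (μ : Measure X) (μ' : Measure X') [IsProbabilityMeasure μ] [IsProbabilityMeasure μ']
    (hinv : ∀ g : G, Measure.map (fun x : X => g • x) μ = μ)
    (hinv' : ∀ g : G, Measure.map (fun x : X' => g • x) μ' = μ')
    (S : Set X) (hS : μ Sᶜ = 0)
    (hSinj : Set.InjOn (fun x : X => MulAction.stabilizer G x) S)
    (S' : Set X') (hS' : μ' S'ᶜ = 0)
    (hS'inj : Set.InjOn (fun x : X' => MulAction.stabilizer G x) S')
    (hpush : Measure.map (fun x : X => MulAction.stabilizer G x) μ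
           = Measure.map (fun x : X' => MulAction.stabilizer G x) μ') :
    ∃ (A : Set X) (B : Set X') (T : X → X') (Tinv : X' → X),
      MeasurableSet A ∧ MeasurableSet B ∧ μ Aᶜ = 0 ∧ μ' Bᶜ = 0 ∧
      (∀ g : G, g • A = A) ∧ (∀ g : G, g • B = B) ∧
      Set.BijOn T A B ∧
      Measurable (fun a : A => T (a : X)) ∧
      Measurable (fun b : B => Tinv (b : X')) ∧
      (∀ x ∈ A, Tinv (T x) = x) ∧ (∀ y ∈ B, T (Tinv y) = y) ∧
      (∀ (g : G), ∀ x ∈ A, T (g • x) = g • T x) ∧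
      Measure.map T (μ.restrict A) = μ'.restrict B := by
  classical
  haveI : Nonempty X := by
    rcases isEmpty_or_nonempty X with h | h
    · exact absurd (measure_univ (μ := μ)) (by simp [Set.univ_eq_empty_iff.2 h])
    · exact h
  haveI : Nonempty X' := by
    rcases isEmpty_or_nonempty X' with h | h
    · exact absurd (measure_univ (μ := μ')) (by simp [Set.univ_eq_empty_iff.2 h])
    · exact h
  set Ψ : X → Subgroup G := fun x => MulAction.stabilizer G x with hΨdef
  set Ψ' : X' → Subgroup G := fun y => MulAction.stabilizer G y with hΨ'def
  have mΨ : Measurable Ψ := measurable_stabilizer' hmeas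
  have mΨ' : Measurable Ψ' := measurable_stabilizer' hmeas'
  obtain ⟨A0, mA0, hA0c, hA0S, hA0inv⟩ := exists_invariant_conull hmeas μ hinv S hS
  obtain ⟨B0, mB0, hB0c, hB0S, hB0inv⟩ := exists_invariant_conull hmeas' μ' hinv' S' hS'
  have injA0 : Set.InjOn Ψ A0 := hSinj.mono hA0S
  have injB0 : Set.InjOn Ψ' B0 := hS'inj.mono hB0S
  haveI := mA0.standardBorel
  haveI := mB0.standardBorel
  -- measurable embeddings and measurability of images
  have embed : ∀ (Z : Set X), MeasurableSet Z → Set.InjOn Ψ Z →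
      ∀ (U : Set X), MeasurableSet U → MeasurableSet (Ψ '' (Z ∩ U)) := by
    intro Z mZ injZ U hU
    haveI := mZ.standardBorel
    have emb : MeasurableEmbedding (fun a : Z => Ψ (a : X)) :=
      (mΨ.comp measurable_subtype_coe).measurableEmbedding
        (fun a b h => Subtype.ext (injZ a.2 b.2 h))
    have himg : Ψ '' (Z ∩ U) = (fun a : Z => Ψ (a : X)) '' ((fun a : Z => (a : X)) ⁻¹' U) := by
      ext H
      constructor
      · rintro ⟨x, ⟨hxZ, hxU⟩, rfl⟩; exact ⟨⟨x, hxZ⟩, hxU, rfl⟩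
      · rintro ⟨⟨x, hxZ⟩, hxU, rfl⟩; exact ⟨x, ⟨hxZ, hxU⟩, rfl⟩
    rw [himg]
    exact (emb.measurableSet_image).2 (measurable_subtype_coe hU)
  have embed' : ∀ (Z : Set X'), MeasurableSet Z → Set.InjOn Ψ' Z →
      ∀ (U : Set X'), MeasurableSet U → MeasurableSet (Ψ' '' (Z ∩ U)) := by
    intro Z mZ injZ U hU
    haveI := mZ.standardBorel
    have emb : MeasurableEmbedding (fun a : Z => Ψ' (a : X')) :=
      (mΨ'.comp measurable_subtype_coe).measurableEmbedding
        (fun a b h => Subtype.ext (injZ a.2 b.2 h))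
    have himg : Ψ' '' (Z ∩ U) = (fun a : Z => Ψ' (a : X')) '' ((fun a : Z => (a : X')) ⁻¹' U) := by
      ext H
      constructor
      · rintro ⟨x, ⟨hxZ, hxU⟩, rfl⟩; exact ⟨⟨x, hxZ⟩, hxU, rfl⟩
      · rintro ⟨⟨x, hxZ⟩, hxU, rfl⟩; exact ⟨x, ⟨hxZ, hxU⟩, rfl⟩
    rw [himg]
    exact (emb.measurableSet_image).2 (measurable_subtype_coe hU)
  set C : Set (Subgroup G) := (Ψ '' A0) ∩ (Ψ' '' B0) with hCdef
  have mC : MeasurableSet C := by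
    have h1 : MeasurableSet (Ψ '' A0) := by
      have := embed A0 mA0 injA0 Set.univ MeasurableSet.univ
      rwa [Set.inter_univ] at this
    have h2 : MeasurableSet (Ψ' '' B0) := by
      have := embed' B0 mB0 injB0 Set.univ MeasurableSet.univ
      rwa [Set.inter_univ] at this
    exact h1.inter h2
  set ν : Measure (Subgroup G) := Measure.map Ψ μ with hνdef
  have hν' : ν = Measure.map Ψ' μ' := hpush
  have hCc : ν Cᶜ = 0 := by
    have mi1 : MeasurableSet (Ψ '' A0) := by
      have := embed A0 mA0 injA0 Set.univ MeasurableSet.univ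
      rwa [Set.inter_univ] at this
    have mi2 : MeasurableSet (Ψ' '' B0) := by
      have := embed' B0 mB0 injB0 Set.univ MeasurableSet.univ
      rwa [Set.inter_univ] at this
    have h1 : ν (Ψ '' A0)ᶜ = 0 := by
      rw [hνdef, Measure.map_apply mΨ mi1.compl]
      refine measure_mono_null ?_ hA0c
      intro x hx hA
      exact hx (Set.mem_image_of_mem _ hA)
    have h2 : ν (Ψ' '' B0)ᶜ = 0 := by
      rw [hν', Measure.map_apply mΨ' mi2.compl]
      refine measure_mono_null ?_ hB0c
      intro y hy hB
      exact hy (Set.mem_image_of_mem _ hB)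
    rw [hCdef, Set.compl_inter]
    exact measure_union_null h1 h2
  set A : Set X := A0 ∩ Ψ ⁻¹' C with hAdef
  set B : Set X' := B0 ∩ Ψ' ⁻¹' C with hBdef
  have mA : MeasurableSet A := mA0.inter (mΨ mC)
  have mB : MeasurableSet B := mB0.inter (mΨ' mC)
  have hAc : μ Aᶜ = 0 := by
    rw [hAdef, Set.compl_inter]
    refine measure_union_null hA0c ?_
    rw [← Set.preimage_compl, ← Measure.map_apply mΨ mC.compl, ← hνdef]
    exact hCc
  have hBc : μ' Bᶜ = 0 := by
    rw [hBdef, Set.compl_inter]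
    refine measure_union_null hB0c ?_
    rw [← Set.preimage_compl, ← Measure.map_apply mΨ' mC.compl, ← hν']
    exact hCc
  -- conjugation invariance of C
  have keyconj : ∀ (g : G) (x : X), Ψ (g • x) = (Ψ x).map (MulAut.conj g).toMonoidHom :=
    fun g x => MulAction.stabilizer_smul_eq_stabilizer_map_conj g x
  have keyconj' : ∀ (g : G) (y : X'), Ψ' (g • y) = (Ψ' y).map (MulAut.conj g).toMonoidHom :=
    fun g y => MulAction.stabilizer_smul_eq_stabilizer_map_conj g y
  have memconj : ∀ (g h : G) (H : Subgroup G),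
      h ∈ H.map (MulAut.conj g).toMonoidHom ↔ g⁻¹ * h * g ∈ H := by
    intro g h H
    rw [Subgroup.mem_map_equiv]
    simp
  have φcancel : ∀ (g : G) (H : Subgroup G),
      (H.map (MulAut.conj g).toMonoidHom).map (MulAut.conj g⁻¹).toMonoidHom = H := by
    intro g H
    ext h
    rw [memconj, memconj]
    group
  have hCconjfwd : ∀ (g : G) (H : Subgroup G), H ∈ C →
      H.map (MulAut.conj g).toMonoidHom ∈ C := by
    rintro g H ⟨⟨x, hx, rfl⟩, ⟨y, hy, hyH⟩⟩
    constructor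
    · refine ⟨g • x, ?_, keyconj g x⟩
      rw [← hA0inv g]; exact Set.smul_mem_smul_set hx
    · refine ⟨g • y, ?_, ?_⟩
      · rw [← hB0inv g]; exact Set.smul_mem_smul_set hy
      · rw [keyconj' g y, hyH]
  have hCconj : ∀ (g : G) (H : Subgroup G),
      H.map (MulAut.conj g).toMonoidHom ∈ C ↔ H ∈ C := by
    intro g H
    constructor
    · intro h
      have := hCconjfwd g⁻¹ _ h
      rwa [φcancel] at this
    · exact hCconjfwd g H
  have hAinv : ∀ g : G, g • A = A := by
    intro g
    ext x
    rw [Set.mem_smul_set_iff_inv_smul_mem]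
    have h1 : g⁻¹ • x ∈ A0 ↔ x ∈ A0 := by
      conv_rhs => rw [← hA0inv g]
      exact (Set.mem_smul_set_iff_inv_smul_mem).symm
    have h2 : Ψ (g⁻¹ • x) ∈ C ↔ Ψ x ∈ C := by
      rw [keyconj]; exact hCconj g⁻¹ (Ψ x)
    simp only [hAdef, Set.mem_inter_iff, Set.mem_preimage]
    rw [h1, h2]
  have hBinv : ∀ g : G, g • B = B := by
    intro g
    ext y
    rw [Set.mem_smul_set_iff_inv_smul_mem]
    have h1 : g⁻¹ • y ∈ B0 ↔ y ∈ B0 := by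
      conv_rhs => rw [← hB0inv g]
      exact (Set.mem_smul_set_iff_inv_smul_mem).symm
    have h2 : Ψ' (g⁻¹ • y) ∈ C ↔ Ψ' y ∈ C := by
      rw [keyconj']; exact hCconj g⁻¹ (Ψ' y)
    simp only [hBdef, Set.mem_inter_iff, Set.mem_preimage]
    rw [h1, h2]
  have injA : Set.InjOn Ψ A := injA0.mono Set.inter_subset_left
  have injB : Set.InjOn Ψ' B := injB0.mono Set.inter_subset_left
  have rangeA : Ψ '' A = C := by
    apply Set.Subset.antisymm
    · rintro _ ⟨x, ⟨hxA0, hxC⟩, rfl⟩; exact hxC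
    · rintro H hH
      obtain ⟨x, hx, rfl⟩ := hH.1
      exact ⟨x, ⟨hx, hH⟩, rfl⟩
  have rangeB : Ψ' '' B = C := by
    apply Set.Subset.antisymm
    · rintro _ ⟨y, ⟨hyB0, hyC⟩, rfl⟩; exact hyC
    · rintro H hH
      obtain ⟨y, hy, rfl⟩ := hH.2
      exact ⟨y, ⟨hy, hH⟩, rfl⟩
  set T : X → X' := fun x => Function.invFunOn Ψ' B (Ψ x) with hTdef
  set Tinv : X' → X := fun y => Function.invFunOn Ψ A (Ψ' y) with hTinvdef
  have hT : ∀ x ∈ A, T x ∈ B ∧ Ψ' (T x) = Ψ x := by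
    intro x hx
    have hmem : Ψ x ∈ Ψ' '' B := by rw [rangeB]; exact hx.2
    obtain ⟨y, hy, hyx⟩ := hmem
    exact ⟨Function.invFunOn_mem ⟨y, hy, hyx⟩, Function.invFunOn_eq ⟨y, hy, hyx⟩⟩
  have hTi : ∀ y ∈ B, Tinv y ∈ A ∧ Ψ (Tinv y) = Ψ' y := by
    intro y hy
    have hmem : Ψ' y ∈ Ψ '' A := by rw [rangeA]; exact hy.2
    obtain ⟨x, hx, hxy⟩ := hmem
    exact ⟨Function.invFunOn_mem ⟨x, hx, hxy⟩, Function.invFunOn_eq ⟨x, hx, hxy⟩⟩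
  have hTinvT : ∀ x ∈ A, Tinv (T x) = x := by
    intro x hx
    obtain ⟨hTB, hTeq⟩ := hT x hx
    obtain ⟨h1, h2⟩ := hTi _ hTB
    exact injA h1 hx (by rw [h2, hTeq])
  have hTTinv : ∀ y ∈ B, T (Tinv y) = y := by
    intro y hy
    obtain ⟨hTA, hTeq⟩ := hTi y hy
    obtain ⟨h1, h2⟩ := hT _ hTA
    exact injB h1 hy (by rw [h2, hTeq])
  have hbij : Set.BijOn T A B := by
    refine ⟨fun x hx => (hT x hx).1, ?_, ?_⟩
    · intro x hx x' hx' h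
      apply injA hx hx'
      rw [← (hT x hx).2, ← (hT x' hx').2, h]
    · intro y hy
      exact ⟨Tinv y, (hTi y hy).1, hTTinv y hy⟩
  have hTequiv : ∀ (g : G), ∀ x ∈ A, T (g • x) = g • T x := by
    intro g x hx
    have hgx : g • x ∈ A := by rw [← hAinv g]; exact Set.smul_mem_smul_set hx
    obtain ⟨h1, h2⟩ := hT _ hgx
    obtain ⟨h3, h4⟩ := hT x hx
    have h5 : g • T x ∈ B := by rw [← hBinv g]; exact Set.smul_mem_smul_set h3
    apply injB h1 h5
    rw [h2, keyconj, keyconj', h4]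
  -- measurability of the restricted maps
  have measT : Measurable (fun a : A => T (a : X)) := by
    intro V hV
    have hW : MeasurableSet (Ψ' '' (B ∩ V)) := embed' B mB injB V hV
    have hpre : (fun a : A => T (a : X)) ⁻¹' V
        = (fun a : A => Ψ (a : X)) ⁻¹' (Ψ' '' (B ∩ V)) := by
      ext a
      simp only [Set.mem_preimage]
      obtain ⟨h1, h2⟩ := hT a a.2
      constructor
      · intro h; exact ⟨T (a : X), ⟨h1, h⟩, h2⟩
      · rintro ⟨y, ⟨hyB, hyV⟩, hy⟩
        have : T (a : X) = y := injB h1 hyB (by rw [h2, hy])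
        rwa [this]
    rw [hpre]
    exact (mΨ.comp measurable_subtype_coe) hW
  have measTinv : Measurable (fun b : B => Tinv (b : X')) := by
    intro U hU
    have hW : MeasurableSet (Ψ '' (A ∩ U)) := embed A mA injA U hU
    have hpre : (fun b : B => Tinv (b : X')) ⁻¹' U
        = (fun b : B => Ψ' (b : X')) ⁻¹' (Ψ '' (A ∩ U)) := by
      ext b
      simp only [Set.mem_preimage]
      obtain ⟨h1, h2⟩ := hTi b b.2
      constructor
      · intro h; exact ⟨Tinv (b : X'), ⟨h1, h⟩, h2⟩
      · rintro ⟨x, ⟨hxA, hxU⟩, hx⟩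
        have : Tinv (b : X') = x := injA h1 hxA (by rw [h2, hx])
        rwa [this]
    rw [hpre]
    exact (mΨ'.comp measurable_subtype_coe) hW
  -- measure preservation
  have hmap : Measure.map T (μ.restrict A) = μ'.restrict B := by
    set T' : X → X' := fun x => if h : x ∈ A then T x else Classical.arbitrary X' with hT'def
    have mT' : Measurable T' :=
      Measurable.dite (s := A) measT (measurable_const (a := Classical.arbitrary X')) mA
    have hae : T =ᵐ[μ.restrict A] T' := by
      rw [Filter.EventuallyEq, ae_restrict_iff' mA]
      exact Filter.Eventually.of_forall (fun x hx => by simp [hT'def, hx])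
    rw [Measure.map_congr hae]
    ext V hV
    rw [Measure.map_apply mT' hV, Measure.restrict_apply (mT' hV), Measure.restrict_apply hV]
    have hW : MeasurableSet (Ψ' '' (B ∩ V)) := embed' B mB injB V hV
    have hset : T' ⁻¹' V ∩ A = Ψ ⁻¹' (Ψ' '' (B ∩ V)) ∩ A := by
      ext x
      simp only [Set.mem_inter_iff, Set.mem_preimage]
      constructor
      · rintro ⟨hxV, hxA⟩
        obtain ⟨h1, h2⟩ := hT x hxA
        have hTx : T' x = T x := dif_pos hxA
        rw [hTx] at hxV
        exact ⟨⟨T x, ⟨h1, hxV⟩, h2⟩, hxA⟩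
      · rintro ⟨⟨y, ⟨hyB, hyV⟩, hy⟩, hxA⟩
        obtain ⟨h1, h2⟩ := hT x hxA
        have hty : T x = y := injB h1 hyB (by rw [h2, hy])
        have hTx : T' x = T x := dif_pos hxA
        refine ⟨?_, hxA⟩
        rw [hTx, hty]
        exact hyV
    rw [hset]
    have hsetB : Ψ' ⁻¹' (Ψ' '' (B ∩ V)) ∩ B = V ∩ B := by
      ext y
      simp only [Set.mem_inter_iff, Set.mem_preimage]
      constructor
      · rintro ⟨⟨z, ⟨hzB, hzV⟩, hz⟩, hyB⟩
        have : z = y := injB hzB hyB hz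
        rw [this] at hzV
        exact ⟨hzV, hyB⟩
      · rintro ⟨hyV, hyB⟩
        exact ⟨⟨y, ⟨hyB, hyV⟩, rfl⟩, hyB⟩
    calc μ (Ψ ⁻¹' (Ψ' '' (B ∩ V)) ∩ A) = μ (Ψ ⁻¹' (Ψ' '' (B ∩ V))) :=
          measure_inter_conull hAc
      _ = ν (Ψ' '' (B ∩ V)) := (Measure.map_apply mΨ hW).symm
      _ = μ' (Ψ' ⁻¹' (Ψ' '' (B ∩ V))) := by rw [hν', Measure.map_apply mΨ' hW]
      _ = μ' (Ψ' ⁻¹' (Ψ' '' (B ∩ V)) ∩ B) := (measure_inter_conull hBc).symm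
      _ = μ' (V ∩ B) := by rw [hsetB]
  exact ⟨A, B, T, Tinv, mA, mB, hAc, hBc, hAinv, hBinv, hbij, measT, measTinv,
    hTinvT, hTTinv, hTequiv, hmap⟩
end

section
/- Let G be a countable group and ν a finite measure on Subgroup G (with the σ-algebra 𝔅) such that ν-almost every subgroup is self-normalizing (the complement of {H | H.normalizer = H} is ν-null). Say a family 𝒞 of measurable subsets of Subgroup G generates the full σ-algebra mod ν if for every A ∈ 𝔅 there is a set B in the σ-algebra generated by 𝒞 with ν(A Δ B) = 0. Then the family of conjugation fixed-point sets {Fix_g = {H | gHg⁻¹ = H} : g ∈ G} generates the full σ-algebra mod ν if and only if the family {L_g = {H | g ∈ H} : g ∈ G, ν(L_g) > 0} generates the full σ-algebra mod ν. -/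
open MeasureTheory MulAction symmDiff

/-- A family `C` of subsets of a measurable space generates the full σ-algebra mod `ν` if every
measurable set agrees `ν`-almost everywhere (null symmetric difference) with a set in the
σ-algebra generated by `C`. -/
def GeneratesMod {α : Type*} [MeasurableSpace α] (ν : Measure α) (C : Set (Set α)) : Prop :=
  ∀ A : Set α, MeasurableSet A →
    ∃ B : Set α, MeasurableSet[MeasurableSpace.generateFrom C] B ∧ ν (A ∆ B) = 0

/-- Membership in the conjugation-fixed set is equivalent to membership in the normalizer. -/
lemma conjFix_iff_mem_normalizer {G : Type*} [Group G] (g : G) (H : Subgroup G) :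
    Subgroup.map (MulAut.conj g).toMonoidHom H = H ↔ g ∈ Subgroup.normalizer (H : Set G) := by
  constructor
  · intro hmap
    rw [Subgroup.mem_normalizer_iff]
    intro n
    constructor
    · intro hn
      rw [← hmap]
      exact ⟨n, hn, rfl⟩
    · intro hn
      rw [← hmap] at hn
      obtain ⟨y, hy, hxy⟩ := hn
      have : y = n := by
        have : g * y * g⁻¹ = g * n * g⁻¹ := hxy
        group at this ⊢
        exact mul_left_cancel (mul_right_cancel this)
      rwa [← this]
  · intro hg
    rw [Subgroup.mem_normalizer_iff] at hg
    ext x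
    constructor
    · rintro ⟨y, hy, rfl⟩
      exact (hg y).1 hy
    · intro hx
      refine ⟨g⁻¹ * x * g, ?_, ?_⟩
      · have := (hg (g⁻¹ * x * g)).2
        apply this
        group
        simpa using hx
      · show g * (g⁻¹ * x * g) * g⁻¹ = x
        group

/-- If every generator of `C` is approximable mod `ν` by `generateFrom D`-measurable sets,
then every `generateFrom C`-measurable set is. -/
lemma approx_of_generators {α : Type*} [MeasurableSpace α] (ν : Measure α) (C D : Set (Set α))
    (hCD : ∀ s ∈ C, ∃ B, MeasurableSet[MeasurableSpace.generateFrom D] B ∧ ν (s ∆ B) = 0) :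
    ∀ A, MeasurableSet[MeasurableSpace.generateFrom C] A →
      ∃ B, MeasurableSet[MeasurableSpace.generateFrom D] B ∧ ν (A ∆ B) = 0 := by
  intro A hA
  induction hA with
  | basic t ht => exact hCD t ht
  | empty => exact ⟨∅, @MeasurableSet.empty _ (MeasurableSpace.generateFrom D), by simp⟩
  | compl t ht iht =>
    obtain ⟨B, hB, hν⟩ := iht
    exact ⟨Bᶜ, hB.compl, by rwa [compl_symmDiff_compl]⟩
  | iUnion f hf ihf =>
    choose B hB hν using ihf
    refine ⟨⋃ n, B n, MeasurableSet.iUnion hB, ?_⟩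
    have hsub : (⋃ n, f n) ∆ (⋃ n, B n) ⊆ ⋃ n, f n ∆ B n := by
      intro x hx
      rcases hx with ⟨hx1, hx2⟩ | ⟨hx1, hx2⟩
      · obtain ⟨_, ⟨n, rfl⟩, hn⟩ := hx1
        exact Set.mem_iUnion.2 ⟨n, Or.inl ⟨hn, fun hxB => hx2 (Set.mem_iUnion.2 ⟨n, hxB⟩)⟩⟩
      · obtain ⟨_, ⟨n, rfl⟩, hn⟩ := hx1
        exact Set.mem_iUnion.2 ⟨n, Or.inr ⟨hn, fun hxB => hx2 (Set.mem_iUnion.2 ⟨n, hxB⟩)⟩⟩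
    refine measure_mono_null hsub ?_
    exact measure_iUnion_null hν

lemma generatesMod_of_subset {α : Type*} [MeasurableSpace α] (ν : Measure α) (C D : Set (Set α))
    (hCD : ∀ s ∈ C, ∃ B, MeasurableSet[MeasurableSpace.generateFrom D] B ∧ ν (s ∆ B) = 0)
    (hC : GeneratesMod ν C) : GeneratesMod ν D := by
  intro A hA
  obtain ⟨B, hB, hν⟩ := hC A hA
  obtain ⟨B', hB', hν'⟩ := approx_of_generators ν C D hCD B hB
  refine ⟨B', hB', measure_mono_null (symmDiff_triangle A B B') ?_⟩
  exact measure_union_null hν hν'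

/-- Proposition 8: let `ν` be a finite measure on `Subgroup G` (`G` countable) such that
`ν`-almost every subgroup is self-normalizing. Then the conjugation fixed-point sets
`Fix_g = {H | gHg⁻¹ = H}` generate the full σ-algebra mod `ν` if and only if the sets
`L_g = {H | g ∈ H}` of positive `ν`-measure generate the full σ-algebra mod `ν`. -/
theorem totallyNonfree_iff_memSets_generate {G : Type*} [Group G] [Countable G]
    (ν : Measure (Subgroup G)) [IsFiniteMeasure ν]
    (h : ν {H : Subgroup G | Subgroup.normalizer (H : Set G) = H}ᶜ = 0) :
    GeneratesMod ν {s : Set (Subgroup G) |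
        ∃ g : G, s = {H : Subgroup G | Subgroup.map (MulAut.conj g).toMonoidHom H = H}}
      ↔ GeneratesMod ν {s : Set (Subgroup G) |
        ∃ g : G, 0 < ν {H : Subgroup G | g ∈ H} ∧ s = {H : Subgroup G | g ∈ H}} := by
  -- On the conull set of self-normalizing subgroups, Fix_g and L_g coincide.
  have key : ∀ g : G,
      {H : Subgroup G | Subgroup.map (MulAut.conj g).toMonoidHom H = H}
        ∆ {H : Subgroup G | g ∈ H} ⊆ {H : Subgroup G | Subgroup.normalizer (H : Set G) = H}ᶜ := by
    intro g H hH hN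
    have hN' : Subgroup.normalizer (H : Set G) = H := hN
    have : (Subgroup.map (MulAut.conj g).toMonoidHom H = H) ↔ g ∈ H := by
      rw [conjFix_iff_mem_normalizer, hN']
    rcases hH with ⟨h1, h2⟩ | ⟨h1, h2⟩
    · exact h2 (this.1 h1)
    · exact h2 (this.2 h1)
  constructor
  · refine generatesMod_of_subset ν _ _ ?_
    rintro s ⟨g, rfl⟩
    by_cases hg : 0 < ν {H : Subgroup G | g ∈ H}
    · refine ⟨{H : Subgroup G | g ∈ H},
        MeasurableSpace.measurableSet_generateFrom ⟨g, hg, rfl⟩, ?_⟩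
      exact measure_mono_null (key g) h
    · -- ν L_g = 0, approximate by ∅
      push_neg at hg
      have hLg : ν {H : Subgroup G | g ∈ H} = 0 := le_antisymm hg bot_le
      refine ⟨∅, @MeasurableSet.empty _ (MeasurableSpace.generateFrom _), ?_⟩
      have he : {H : Subgroup G | Subgroup.map (MulAut.conj g).toMonoidHom H = H} ∆ (∅ : Set (Subgroup G))
          = {H : Subgroup G | Subgroup.map (MulAut.conj g).toMonoidHom H = H} := by
        simp [Set.symmDiff_def]
      rw [he]
      have hsub : {H : Subgroup G | Subgroup.map (MulAut.conj g).toMonoidHom H = H} ⊆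
          {H : Subgroup G | g ∈ H} ∪ {H : Subgroup G | Subgroup.normalizer (H : Set G) = H}ᶜ := by
        intro H hH
        by_cases hN : Subgroup.normalizer (H : Set G) = H
        · left
          have := (conjFix_iff_mem_normalizer g H).1 hH
          rw [hN] at this
          exact this
        · right; exact hN
      exact measure_mono_null hsub (measure_union_null hLg h)
  · refine generatesMod_of_subset ν _ _ ?_
    rintro s ⟨g, hg, rfl⟩
    refine ⟨{H : Subgroup G | Subgroup.map (MulAut.conj g).toMonoidHom H = H},
      MeasurableSpace.measurableSet_generateFrom ⟨g, rfl⟩, ?_⟩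
    rw [symmDiff_comm]
    exact measure_mono_null (key g) h
end
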